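/- Given a 2-colouring (red/blue) of a complete directed graph, if there are at least 2k + 2l vertices each having red out-degree at most k, then there is a blue copy of every oriented tree on at most l vertices. -/

import Mathlib

/-- The underlying simple graph of a directed graph given as a relation. -/
def Underlying {V : Type*} (t : V → V → Prop) : SimpleGraph V where
  Adj x y := x ≠ y ∧ (t x y ∨ t y x)
  symm := ⟨fun _ _ h => ⟨Ne.symm h.1, Or.symm h.2⟩⟩
  loopless := ⟨fun _ h => h.1 rfl⟩

/-- An oriented tree: no bidirected edges, and the underlying graph is a tree. -/
def IsOrientedTree {V : Type*} (t : V → V → Prop) : Prop :=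
  (∀ x y, t x y → ¬ t y x) ∧ (Underlying t).IsTree

/-- A tournament: no loops, and between any two distinct vertices exactly one
directed edge. -/
def IsTournament {V : Type*} (T : V → V → Prop) : Prop :=
  (∀ x, ¬ T x x) ∧ ∀ x y : V, x ≠ y → (T x y ↔ ¬ T y x)

namespace BlueTreeAux

variable {N : ℕ}

/-- blue in-degree of `v` within `C`. -/
def bIn (χ : Fin N → Fin N → Fin 2) (C : Finset (Fin N)) (v : Fin N) : ℕ :=
  (C.filter fun w => w ≠ v ∧ χ w v = 1).card

/-- blue out-degree of `v` within `C`. -/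
def bOut (χ : Fin N → Fin N → Fin 2) (C : Finset (Fin N)) (v : Fin N) : ℕ :=
  (C.filter fun w => w ≠ v ∧ χ v w = 1).card

/-- red in-degree of `v` within `C`. -/
def rIn (χ : Fin N → Fin N → Fin 2) (C : Finset (Fin N)) (v : Fin N) : ℕ :=
  (C.filter fun w => w ≠ v ∧ χ w v = 0).card

/-- red out-degree of `v` within `C`. -/
def rOut (χ : Fin N → Fin N → Fin 2) (C : Finset (Fin N)) (v : Fin N) : ℕ :=
  (C.filter fun w => w ≠ v ∧ χ v w = 0).card

/-- number of red arcs within `C`. -/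
def RA (χ : Fin N → Fin N → Fin 2) (C : Finset (Fin N)) : ℕ :=
  ∑ v ∈ C, rOut χ C v

lemma fin2_cases (x : Fin 2) : x = 0 ∨ x = 1 := by
  fin_cases x <;> simp

lemma partition_in (χ : Fin N → Fin N → Fin 2) {C : Finset (Fin N)} {u : Fin N}
    (hu : u ∈ C) : bIn χ C u + rIn χ C u + 1 = C.card := by
  classical
  have h1 : C.filter (fun w => w ≠ u ∧ χ w u = 1)
      = (C.erase u).filter (fun w => χ w u = 1) := by
    ext w
    simp only [Finset.mem_filter, Finset.mem_erase]
    tauto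
  have h0 : C.filter (fun w => w ≠ u ∧ χ w u = 0)
      = (C.erase u).filter (fun w => χ w u = 0) := by
    ext w
    simp only [Finset.mem_filter, Finset.mem_erase]
    tauto
  have hpart := Finset.card_filter_add_card_filter_not
    (s := C.erase u) (p := fun w => χ w u = 1)
  have hneg : (C.erase u).filter (fun w => ¬ χ w u = 1)
      = (C.erase u).filter (fun w => χ w u = 0) := by
    apply Finset.filter_congr
    intro w _
    rcases fin2_cases (χ w u) with h | h <;> simp [h]
  have hcard : (C.erase u).card = C.card - 1 := Finset.card_erase_of_mem hu
  have hpos : 0 < C.card := Finset.card_pos.mpr ⟨u, hu⟩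
  rw [bIn, rIn, h1, h0]
  rw [hneg] at hpart
  omega

lemma partition_out (χ : Fin N → Fin N → Fin 2) {C : Finset (Fin N)} {u : Fin N}
    (hu : u ∈ C) : bOut χ C u + rOut χ C u + 1 = C.card := by
  classical
  have h1 : C.filter (fun w => w ≠ u ∧ χ u w = 1)
      = (C.erase u).filter (fun w => χ u w = 1) := by
    ext w
    simp only [Finset.mem_filter, Finset.mem_erase]
    tauto
  have h0 : C.filter (fun w => w ≠ u ∧ χ u w = 0)
      = (C.erase u).filter (fun w => χ u w = 0) := by
    ext w
    simp only [Finset.mem_filter, Finset.mem_erase]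
    tauto
  have hpart := Finset.card_filter_add_card_filter_not
    (s := C.erase u) (p := fun w => χ u w = 1)
  have hneg : (C.erase u).filter (fun w => ¬ χ u w = 1)
      = (C.erase u).filter (fun w => χ u w = 0) := by
    apply Finset.filter_congr
    intro w _
    rcases fin2_cases (χ u w) with h | h <;> simp [h]
  have hcard : (C.erase u).card = C.card - 1 := Finset.card_erase_of_mem hu
  have hpos : 0 < C.card := Finset.card_pos.mpr ⟨u, hu⟩
  rw [bOut, rOut, h1, h0]
  rw [hneg] at hpart
  omega

lemma RA_erase (χ : Fin N → Fin N → Fin 2) {C : Finset (Fin N)} {u : Fin N}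
    (hu : u ∈ C) : RA χ C = RA χ (C.erase u) + rOut χ C u + rIn χ C u := by
  classical
  have key : ∀ v ∈ C.erase u,
      rOut χ C v = rOut χ (C.erase u) v + (if u ≠ v ∧ χ v u = 0 then 1 else 0) := by
    intro v hv
    unfold rOut
    conv_lhs => rw [← Finset.insert_erase hu]
    rw [Finset.filter_insert]
    split_ifs with h
    · rw [Finset.card_insert_of_notMem]
      intro hmem
      exact (Finset.notMem_erase u C) (Finset.mem_of_mem_filter u hmem)
    · rfl
  have hsum : ∑ v ∈ C.erase u, rOut χ C v
      = RA χ (C.erase u) + ((C.erase u).filter (fun v => u ≠ v ∧ χ v u = 0)).card := by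
    rw [Finset.sum_congr rfl key, Finset.sum_add_distrib]
    congr 1
    rw [Finset.card_filter]
  have hflip : ((C.erase u).filter (fun v => u ≠ v ∧ χ v u = 0)).card = rIn χ C u := by
    unfold rIn
    congr 1
    ext w
    simp only [Finset.mem_filter, Finset.mem_erase]
    constructor
    · rintro ⟨⟨hwu, hwC⟩, _, h0⟩
      exact ⟨hwC, hwu, h0⟩
    · rintro ⟨hwC, hwu, h0⟩
      exact ⟨⟨hwu, hwC⟩, Ne.symm hwu, h0⟩
  have htot : rOut χ C u + ∑ v ∈ C.erase u, rOut χ C v = ∑ v ∈ C, rOut χ C v :=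
    Finset.add_sum_erase C _ hu
  have hra : RA χ C = rOut χ C u + ∑ v ∈ C.erase u, rOut χ C v := htot.symm
  omega

lemma RA_le (χ : Fin N → Fin N → Fin 2) {C : Finset (Fin N)} {k : ℕ}
    (hC : ∀ v ∈ C, ({w : Fin N | w ≠ v ∧ χ v w = 0}).ncard ≤ k) :
    RA χ C ≤ k * C.card := by
  classical
  have h : ∀ v ∈ C, rOut χ C v ≤ k := by
    intro v hv
    have hfin : ({w : Fin N | w ≠ v ∧ χ v w = 0}).Finite := Set.toFinite _
    have h1 := hC v hv
    rw [Set.ncard_eq_toFinset_card _ hfin] at h1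
    refine le_trans (Finset.card_le_card ?_) h1
    intro w hw
    rw [Set.Finite.mem_toFinset]
    exact (Finset.mem_filter.mp hw).2
  calc RA χ C ≤ C.card • k := Finset.sum_le_card_nsmul C _ k h
  _ = k * C.card := by rw [smul_eq_mul, Nat.mul_comm]

lemma core_exists (χ : Fin N → Fin N → Fin 2) (l : ℕ) :
    ∀ (d : ℕ) (C : Finset (Fin N)), C.card = l + d → 2 * RA χ C < d * (d + 1) →
    ∃ K : Finset (Fin N), K.Nonempty ∧ ∀ u ∈ K, l ≤ bIn χ K u ∧ l ≤ bOut χ K u := by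
  intro d
  induction d with
  | zero =>
    intro C _ h
    omega
  | succ e ih =>
    intro C hc h
    by_cases hgood : ∀ u ∈ C, l ≤ bIn χ C u ∧ l ≤ bOut χ C u
    · exact ⟨C, Finset.card_pos.mp (by omega), hgood⟩
    · push_neg at hgood
      obtain ⟨u, hu, hbad⟩ := hgood
      have hin := partition_in χ hu
      have hout := partition_out χ hu
      have hdrop : e + 1 ≤ rOut χ C u + rIn χ C u := by
        rcases le_or_gt l (bIn χ C u) with h1 | h1
        · have h2 := hbad h1
          omega
        · omega
      have hRA := RA_erase χ hu
      have hcard' : (C.erase u).card = l + e := by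
        rw [Finset.card_erase_of_mem hu]
        omega
      refine ih (C.erase u) hcard' ?_
      have hexp : (e + 1) * (e + 1 + 1) = e * (e + 1) + 2 * (e + 1) := by ring
      omega


lemma embed {m : ℕ} (χ : Fin N → Fin N → Fin 2) (l : ℕ) (t : Fin m → Fin m → Prop)
    (h1 : ∀ x y, t x y → ¬ t y x) (htree : (Underlying t).IsTree) (hm : m ≤ l)
    (K : Finset (Fin N)) (hKne : K.Nonempty)
    (hgood : ∀ u ∈ K, l ≤ bIn χ K u ∧ l ≤ bOut χ K u) :
    ∃ f : Fin m → Fin N, Function.Injective f ∧ ∀ x y, t x y → χ (f x) (f y) = 1 := by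
  classical
  have hconn := htree.isConnected
  have hNE : Nonempty (Fin m) := hconn.nonempty
  obtain ⟨r⟩ := hNE
  -- uniqueness of the neighbour of a new vertex in a connected placed set
  have uniq : ∀ (A : Finset (Fin m)) (v : Fin m), v ∉ A →
      (∀ a ∈ A, ∃ w : (Underlying t).Walk r a, ∀ x ∈ w.support, x ∈ A) →
      ∀ u ∈ A, ∀ b ∈ A, (Underlying t).Adj u v → (Underlying t).Adj b v → u = b := by
    intro A v hv hwalks u hu b hb huv hbv
    obtain ⟨wu, hwu⟩ := hwalks u hu
    obtain ⟨wb, hwb⟩ := hwalks b hb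
    have hvu : v ∉ wu.bypass.reverse.support := by
      intro hx
      rw [SimpleGraph.Walk.support_reverse, List.mem_reverse] at hx
      exact hv (hwu v (wu.support_bypass_subset hx))
    have hvb : v ∉ wb.bypass.reverse.support := by
      intro hx
      rw [SimpleGraph.Walk.support_reverse, List.mem_reverse] at hx
      exact hv (hwb v (wb.support_bypass_subset hx))
    have hq1 : (SimpleGraph.Walk.cons huv.symm wu.bypass.reverse).IsPath :=
      (wu.bypass_isPath.reverse).cons hvu
    have hq2 : (SimpleGraph.Walk.cons hbv.symm wb.bypass.reverse).IsPath :=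
      (wb.bypass_isPath.reverse).cons hvb
    have heq := (htree.existsUnique_path v r).unique hq1 hq2
    have h2 := congrArg (fun w : (Underlying t).Walk v r => w.getVert 1) heq
    simpa [SimpleGraph.Walk.getVert_cons_succ] using h2
  -- the greedy extension loop
  have main : ∀ (s : ℕ) (A : Finset (Fin m)) (f : Fin m → Fin N),
      (Finset.univ \ A).card = s → r ∈ A →
      (∀ a ∈ A, ∃ w : (Underlying t).Walk r a, ∀ x ∈ w.support, x ∈ A) →
      (∀ a ∈ A, f a ∈ K) →
      (∀ a ∈ A, ∀ b ∈ A, f a = f b → a = b) →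
      (∀ a ∈ A, ∀ b ∈ A, t a b → χ (f a) (f b) = 1) →
      ∃ g : Fin m → Fin N, Function.Injective g ∧ ∀ x y, t x y → χ (g x) (g y) = 1 := by
    intro s
    induction s with
    | zero =>
      intro A f hA _ _ _ hinj hblue
      have hAu : A = Finset.univ :=
        Finset.univ_subset_iff.mp
          (Finset.sdiff_eq_empty_iff_subset.mp (Finset.card_eq_zero.mp hA))
      subst hAu
      exact ⟨f, fun x y hxy => hinj x (Finset.mem_univ x) y (Finset.mem_univ y) hxy,
        fun x y hxy => hblue x (Finset.mem_univ x) y (Finset.mem_univ y) hxy⟩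
    | succ s ih =>
      intro A f hA hr hwalks hK hinj hblue
      obtain ⟨z, hz⟩ : (Finset.univ \ A).Nonempty := Finset.card_pos.mp (by omega)
      have hzA : z ∉ A := (Finset.mem_sdiff.mp hz).2
      obtain ⟨p⟩ := hconn r z
      obtain ⟨dd, _, hd1, hd2⟩ := p.exists_boundary_dart (↑A)
        (by simpa using hr) (by simpa using hzA)
      have huA : dd.fst ∈ A := by simpa using hd1
      have hvA : dd.snd ∉ A := by simpa using hd2
      set u := dd.fst with hu_def
      set v := dd.snd with hv_def
      have hadj : (Underlying t).Adj u v := dd.adj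
      have hAcard : A.card < m := by
        have hss : A ⊂ Finset.univ := Finset.ssubset_univ_iff.mpr
          (fun h => hvA (h ▸ Finset.mem_univ v))
        have := Finset.card_lt_card hss
        simpa [Finset.card_univ] using this
      have himgcard : (A.image f).card < l :=
        lt_of_le_of_lt Finset.card_image_le (lt_of_lt_of_le hAcard hm)
      have hKu := hK u huA
      -- common extension step
      have step : ∀ w : Fin N, w ∈ K → w ∉ A.image f →
          (t u v → χ (f u) w = 1) → (t v u → χ w (f u) = 1) →
          ∃ g : Fin m → Fin N, Function.Injective g ∧ ∀ x y, t x y → χ (g x) (g y) = 1 := by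
        intro w hwK hwI hwout hwin
        have hsd : Finset.univ \ insert v A = (Finset.univ \ A).erase v :=
          Finset.sdiff_insert Finset.univ A v
        have hvin : v ∈ Finset.univ \ A :=
          Finset.mem_sdiff.mpr ⟨Finset.mem_univ v, hvA⟩
        refine ih (insert v A) (Function.update f v w) ?_ (Finset.mem_insert_of_mem hr)
          ?_ ?_ ?_ ?_
        · rw [hsd, Finset.card_erase_of_mem hvin, hA]
          omega
        · intro a ha
          rcases Finset.mem_insert.mp ha with rfl | haA
          · obtain ⟨wu, hwu⟩ := hwalks u huA
            refine ⟨wu.concat hadj, ?_⟩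
            intro x hx
            rw [SimpleGraph.Walk.support_concat,
              List.mem_append] at hx
            rcases hx with hx | hx
            · exact Finset.mem_insert_of_mem (hwu x hx)
            · rw [List.mem_singleton] at hx
              exact hx ▸ Finset.mem_insert_self _ _
          · obtain ⟨wa, hwa⟩ := hwalks a haA
            exact ⟨wa, fun x hx => Finset.mem_insert_of_mem (hwa x hx)⟩
        · intro a ha
          rcases Finset.mem_insert.mp ha with rfl | haA
          · rw [Function.update_self]; exact hwK
          · rw [Function.update_of_ne (ne_of_mem_of_not_mem haA hvA)]
            exact hK a haA
        · intro a ha b hb hab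
          rcases Finset.mem_insert.mp ha with rfl | haA <;>
            rcases Finset.mem_insert.mp hb with rfl | hbA
          · rfl
          · exfalso
            rw [Function.update_self,
              Function.update_of_ne (ne_of_mem_of_not_mem hbA hvA)] at hab
            exact hwI (Finset.mem_image.mpr ⟨b, hbA, hab.symm⟩)
          · exfalso
            rw [Function.update_self,
              Function.update_of_ne (ne_of_mem_of_not_mem haA hvA)] at hab
            exact hwI (Finset.mem_image.mpr ⟨a, haA, hab⟩)
          · rw [Function.update_of_ne (ne_of_mem_of_not_mem haA hvA),
              Function.update_of_ne (ne_of_mem_of_not_mem hbA hvA)] at hab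
            exact hinj a haA b hbA hab
        · intro a ha b hb hab
          rcases Finset.mem_insert.mp ha with rfl | haA <;>
            rcases Finset.mem_insert.mp hb with rfl | hbA
          · exact absurd hab (h1 v v hab)
          · -- a = v, b ∈ A : t v b, so b = u
            have hbv : (Underlying t).Adj b v := ⟨ne_of_mem_of_not_mem hbA hvA, Or.inr hab⟩
            have hbu : b = u := uniq A v hvA hwalks b hbA u huA hbv hadj
            rw [Function.update_self, Function.update_of_ne (ne_of_mem_of_not_mem hbA hvA), hbu]
            exact hwin (hbu ▸ hab)
          · -- a ∈ A, b = v : t a v, so a = u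
            have hav : (Underlying t).Adj a v := ⟨ne_of_mem_of_not_mem haA hvA, Or.inl hab⟩
            have hau : a = u := uniq A v hvA hwalks a haA u huA hav hadj
            rw [Function.update_of_ne (ne_of_mem_of_not_mem haA hvA), Function.update_self, hau]
            exact hwout (hau ▸ hab)
          · rw [Function.update_of_ne (ne_of_mem_of_not_mem haA hvA),
              Function.update_of_ne (ne_of_mem_of_not_mem hbA hvA)]
            exact hblue a haA b hbA hab
      rcases hadj.2 with htuv | htvu
      · -- choose w a blue out-neighbour of f u
        have hcard : (A.image f).card < (K.filter fun w => w ≠ f u ∧ χ (f u) w = 1).card :=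
          lt_of_lt_of_le himgcard (hgood (f u) hKu).2
        obtain ⟨w, hwF, hwI⟩ := Finset.not_subset.mp
          (fun hsub => absurd (Finset.card_le_card hsub) (not_le.mpr hcard))
        obtain ⟨hwK, hwP⟩ := Finset.mem_filter.mp hwF
        exact step w hwK hwI (fun _ => hwP.2) (fun h' => absurd htuv (h1 v u h'))
      · -- choose w a blue in-neighbour of f u
        have hcard : (A.image f).card < (K.filter fun w => w ≠ f u ∧ χ w (f u) = 1).card :=
          lt_of_lt_of_le himgcard (hgood (f u) hKu).1
        obtain ⟨w, hwF, hwI⟩ := Finset.not_subset.mp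
          (fun hsub => absurd (Finset.card_le_card hsub) (not_le.mpr hcard))
        obtain ⟨hwK, hwP⟩ := Finset.mem_filter.mp hwF
        exact step w hwK hwI (fun h' => absurd h' (h1 v u htvu)) (fun _ => hwP.2)
  obtain ⟨w0, hw0⟩ := hKne
  refine main ((Finset.univ \ {r}).card) {r} (fun _ => w0) rfl (Finset.mem_singleton_self r)
    ?_ ?_ ?_ ?_
  · intro a ha
    rw [Finset.mem_singleton] at ha
    subst ha
    exact ⟨SimpleGraph.Walk.nil, by
      intro x hx
      rw [SimpleGraph.Walk.support_nil, List.mem_singleton] at hx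
      rw [hx]
      exact Finset.mem_singleton_self a⟩
  · intro a _
    exact hw0
  · intro a ha b hb _
    rw [Finset.mem_singleton] at ha hb
    rw [ha, hb]
  · intro a ha b hb hab
    rw [Finset.mem_singleton] at ha hb
    rw [ha, hb] at hab
    exact absurd hab (h1 r r hab)

end BlueTreeAux

/-- In a 2-colouring (colour `0` red, colour `1` blue) of the complete
directed graph, if at least `2k + 2l` vertices have red out-degree at most `k`, then
there is a blue copy of every oriented tree on at most `l` vertices. -/
theorem blue_tree_of_many_small_red_outdegree (N k l : ℕ) (χ : Fin N → Fin N → Fin 2)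
    (S : Set (Fin N)) (hS : 2 * k + 2 * l ≤ S.ncard)
    (hdeg : ∀ v ∈ S, {w : Fin N | w ≠ v ∧ χ v w = 0}.ncard ≤ k) :
    ∀ (m : ℕ) (t : Fin m → Fin m → Prop), IsOrientedTree t → m ≤ l →
      ∃ f : Fin m → Fin N, Function.Injective f ∧ ∀ x y, t x y → χ (f x) (f y) = 1 := by
  classical
  intro m t ht hml
  obtain ⟨h1, htree⟩ := ht
  have hfin : S.Finite := Set.toFinite S
  set Sf : Finset (Fin N) := hfin.toFinset with hSf
  have hcardS : 2 * k + 2 * l ≤ Sf.card := by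
    rwa [Set.ncard_eq_toFinset_card S hfin] at hS
  have hm1 : 0 < m := Fin.pos_iff_nonempty.mpr htree.isConnected.nonempty
  have hl1 : 1 ≤ l := le_trans hm1 hml
  have hRA : BlueTreeAux.RA χ Sf ≤ k * Sf.card := by
    apply BlueTreeAux.RA_le
    intro v hv
    exact hdeg v (hfin.mem_toFinset.mp hv)
  set d := Sf.card - l with hd
  have hcd : Sf.card = l + d := by omega
  have hkey : 2 * BlueTreeAux.RA χ Sf < d * (d + 1) := by
    have h2 : 2 * k + l ≤ d := by omega
    have h3 : (2 * k + l) * d ≤ d * d := Nat.mul_le_mul h2 (le_refl d)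
    have h4 : l * (2 * k + l) ≤ l * d := Nat.mul_le_mul (le_refl l) h2
    have h6 : 2 * BlueTreeAux.RA χ Sf ≤ 2 * (k * (l + d)) := by rw [← hcd]; omega
    nlinarith [h3, h4, h6, hl1]
  obtain ⟨K, hKne, hKgood⟩ := BlueTreeAux.core_exists χ l d Sf hcd hkey
  exact BlueTreeAux.embed χ l t h1 htree hml K hKne hKgood
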